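/- arXiv:1703.04248 — 3 statements merged into one kernel-verified Lean document; each statement's English description precedes it below -/
import Mathlib

section
/- For every prime p, the central binomial coefficient satisfies the identity in ℚ: C(2p, p) = 2 · Σ_{n=0}^{p−1} p^n · H_{p−1}(1^n). -/
/-- Multiple harmonic sum `H_N(s₁,…,s_k)`. -/
def mhs : ℕ → List ℕ → ℚ
  | _, [] => 1
  | N, s :: t => ∑ n ∈ Finset.Icc 1 N, (1 / (n : ℚ) ^ s) * mhs (n - 1) t

lemma mhs_succ (N s : ℕ) (t : List ℕ) :
    mhs (N + 1) (s :: t) = mhs N (s :: t) + (1 / ((N : ℚ) + 1) ^ s) * mhs N t := by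
  rw [mhs, mhs, Finset.sum_Icc_succ_top (by omega)]
  push_cast
  simp

lemma mhs_zero : ∀ N n : ℕ, N < n → mhs N (List.replicate n 1) = 0 := by
  intro N
  induction N with
  | zero =>
    intro n hn
    obtain ⟨m, rfl⟩ := Nat.exists_eq_succ_of_ne_zero (by omega : n ≠ 0)
    rw [List.replicate_succ, mhs]
    simp
  | succ N ih =>
    intro n hn
    obtain ⟨m, rfl⟩ := Nat.exists_eq_succ_of_ne_zero (by omega : n ≠ 0)
    rw [List.replicate_succ, mhs_succ, ← List.replicate_succ,
      ih (m + 1) (by omega), ih m (by omega)]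
    ring

lemma gen_fun (x : ℚ) : ∀ N : ℕ,
    ∑ n ∈ Finset.range (N + 1), x ^ n * mhs N (List.replicate n 1) =
      ∏ k ∈ Finset.Icc 1 N, (1 + x / k) := by
  intro N
  induction N with
  | zero => simp [mhs]
  | succ N ih =>
    have key : ∑ n ∈ Finset.range (N + 2), x ^ n * mhs (N + 1) (List.replicate n 1)
        = (1 + x / (N + 1)) *
          ∑ n ∈ Finset.range (N + 1), x ^ n * mhs N (List.replicate n 1) := by
      rw [Finset.sum_range_succ' (fun n => x ^ n * mhs (N + 1) (List.replicate n 1))]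
      have h1 : ∀ i ∈ Finset.range (N + 1),
          x ^ (i + 1) * mhs (N + 1) (List.replicate (i + 1) 1) =
            x ^ (i + 1) * mhs N (List.replicate (i + 1) 1)
              + (x / (N + 1)) * (x ^ i * mhs N (List.replicate i 1)) := by
        intro i _
        rw [List.replicate_succ, mhs_succ, ← List.replicate_succ]
        field_simp
        ring
      rw [Finset.sum_congr rfl h1, Finset.sum_add_distrib, ← Finset.mul_sum]
      have h2 : ∑ i ∈ Finset.range (N + 1),
          x ^ (i + 1) * mhs N (List.replicate (i + 1) 1)
          = ∑ n ∈ Finset.range (N + 1), x ^ n * mhs N (List.replicate n 1) - 1 := by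
        have := Finset.sum_range_succ'
          (fun n => x ^ n * mhs N (List.replicate n 1)) (N + 1)
        rw [Finset.sum_range_succ (fun n => x ^ n * mhs N (List.replicate n 1)) (N + 1),
          mhs_zero N (N + 1) (by omega)] at this
        simp only [pow_zero, one_mul] at this
        have h0 : mhs N (List.replicate 0 1) = 1 := by simp [mhs]
        rw [h0] at this
        linarith [this]
      rw [h2]
      have h0 : mhs (N + 1) (List.replicate 0 1) = 1 := by simp [mhs]
      rw [h0]
      ring
    rw [key, ih, Finset.prod_Icc_succ_top (by omega : 1 ≤ N + 1)]
    push_cast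
    ring

lemma prod_fact (p : ℕ) : ∀ m : ℕ,
    ∏ k ∈ Finset.Icc 1 m, (1 + (p : ℚ) / k) =
      (Nat.factorial (p + m) : ℚ) / (Nat.factorial p * Nat.factorial m) := by
  intro m
  induction m with
  | zero =>
    have hfp : (Nat.factorial p : ℚ) ≠ 0 := by exact_mod_cast Nat.factorial_ne_zero p
    simp [Nat.factorial, div_self hfp]
  | succ m ih =>
    rw [Finset.prod_Icc_succ_top (by omega : 1 ≤ m + 1), ih]
    have h1 : (Nat.factorial (p + (m + 1)) : ℚ)
        = (p + m + 1) * Nat.factorial (p + m) := by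
      have : p + (m + 1) = (p + m) + 1 := by ring
      rw [this, Nat.factorial_succ]
      push_cast; ring
    have h2 : (Nat.factorial (m + 1) : ℚ) = (m + 1) * Nat.factorial m := by
      rw [Nat.factorial_succ]; push_cast; ring
    rw [h1, h2]
    have hm : ((m : ℚ) + 1) ≠ 0 := by positivity
    have hfp : (Nat.factorial p : ℚ) ≠ 0 := by
      exact_mod_cast Nat.factorial_ne_zero p
    have hfm : (Nat.factorial m : ℚ) ≠ 0 := by
      exact_mod_cast Nat.factorial_ne_zero m
    push_cast
    field_simp
    ring

/-- For every prime `p`, `C(2p, p) = 2 · ∑_{n=0}^{p-1} p^n · H_{p-1}(1^n)` in `ℚ`. -/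
theorem centralBinom_eq_mhs_series (p : ℕ) (hp : p.Prime) :
    (Nat.choose (2 * p) p : ℚ) =
      2 * ∑ n ∈ Finset.range p, (p : ℚ) ^ n * mhs (p - 1) (List.replicate n 1) := by
  have hp1 : 1 ≤ p := hp.one_lt.le.trans' (by norm_num)
  obtain ⟨N, rfl⟩ : ∃ N, p = N + 1 := ⟨p - 1, by omega⟩
  have hsum := gen_fun ((N : ℚ) + 1) N
  have hsimp : (N + 1) - 1 = N := by omega
  rw [hsimp]
  have hcast : ((N + 1 : ℕ) : ℚ) = (N : ℚ) + 1 := by push_cast; ring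
  rw [hcast, hsum]
  have hprod := prod_fact (N + 1) N
  push_cast at hprod
  rw [hprod]
  -- now show (C(2(N+1), N+1) : ℚ) = 2 * (N+1+N)! / ((N+1)! * N!)
  have hle : N + 1 ≤ 2 * (N + 1) := by omega
  rw [Nat.cast_choose ℚ hle]
  have h2 : 2 * (N + 1) - (N + 1) = N + 1 := by omega
  rw [h2]
  have hA : (Nat.factorial (2 * (N + 1)) : ℚ)
      = 2 * ((N : ℚ) + 1) * Nat.factorial (N + 1 + N) := by
    have : 2 * (N + 1) = (N + 1 + N) + 1 := by ring
    rw [this, Nat.factorial_succ]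
    push_cast; ring
  have hB : (Nat.factorial (N + 1) : ℚ) = ((N : ℚ) + 1) * Nat.factorial N := by
    rw [Nat.factorial_succ]; push_cast; ring
  rw [hA]
  rw [hB]
  have hN1 : ((N : ℚ) + 1) ≠ 0 := by positivity
  have hfN : (Nat.factorial N : ℚ) ≠ 0 := by exact_mod_cast Nat.factorial_ne_zero N
  field_simp
end

section
/- For all sufficiently large primes p, the rational number S_p − 2 − p^4·H_{p−1}(4) + 4·p^5·H_{p−1}(4,1) is either zero or has p-adic valuation at least 6 (i.e. S_p ≡ 2 + p^4·H_{p−1}(4) − 4·p^5·H_{p−1}(4,1) mod p^6), where S_p := Σ_{k=0}^{p} C(p, k)^4. -/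
set_option linter.unusedSectionVars false
set_option linter.unusedTactic false

section Aux

variable {p : ℕ} [hp : Fact p.Prime]

/-- the product ∏_{j=1}^m (1 - p/j) -/
noncomputable def Pprod (p m : ℕ) : ℚ := ∏ j ∈ Finset.Icc 1 m, (1 - (p : ℚ) / j)

/-- harmonic sum -/
noncomputable def Hsum (m : ℕ) : ℚ := ∑ n ∈ Finset.Icc 1 m, 1 / (n : ℚ)

lemma norm_nat_unit {k : ℕ} (h0 : 1 ≤ k) (hk : k < p) : padicNorm p (k : ℚ) = 1 := by
  rw [padicNorm.nat_eq_one_iff]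
  exact fun hd => absurd (Nat.le_of_dvd h0 hd) (not_le.mpr hk)

lemma norm_inv_nat_unit {k : ℕ} (h0 : 1 ≤ k) (hk : k < p) :
    padicNorm p (1 / (k : ℚ)) = 1 := by
  rw [padicNorm.div, padicNorm.one, norm_nat_unit h0 hk, div_one]

lemma norm_Hsum_le {m : ℕ} (hm : m < p) : padicNorm p (Hsum m) ≤ 1 := by
  apply padicNorm.sum_le' _ zero_le_one
  intro n hn
  simp only [Finset.mem_Icc] at hn
  exact le_of_eq (norm_inv_nat_unit hn.1 (lt_of_le_of_lt hn.2 hm))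

lemma norm_Pprod_le {m : ℕ} (hm : m < p) : padicNorm p (Pprod p m) ≤ 1 := by
  unfold Pprod
  refine Finset.prod_induction _ (fun x => padicNorm p x ≤ 1) ?_ ?_ ?_
  · intro a b ha hb
    rw [padicNorm.mul]
    exact mul_le_one₀ ha (padicNorm.nonneg _) hb
  · simp [padicNorm.one]
  · intro j hj
    simp only [Finset.mem_Icc] at hj
    refine padicNorm.sub.trans (max_le (le_of_eq padicNorm.one) ?_)
    rw [div_eq_mul_one_div, padicNorm.mul, norm_inv_nat_unit hj.1 (lt_of_le_of_lt hj.2 hm),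
      mul_one, padicNorm.padicNorm_p_of_prime]
    have : (1:ℚ) < p := by exact_mod_cast hp.out.one_lt
    exact inv_le_one_of_one_le₀ this.le


lemma norm_p_rat : padicNorm p (p : ℚ) = ((p:ℚ))⁻¹ := padicNorm.padicNorm_p_of_prime

lemma one_lt_p_rat : (1:ℚ) < p := by exact_mod_cast hp.out.one_lt

lemma pinv_le_one : ((p:ℚ))⁻¹ ≤ 1 := inv_le_one_of_one_le₀ (one_lt_p_rat (p := p)).le

lemma zpow_neg_le {a b : ℤ} (h : a ≤ b) : (p:ℚ) ^ (-b) ≤ (p:ℚ) ^ (-a) :=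
  zpow_le_zpow_right₀ (one_lt_p_rat (p := p)).le (neg_le_neg h)

lemma key_ind {m : ℕ} (hm : m < p) :
    padicNorm p (Pprod p m - 1 + p * Hsum m) ≤ (p:ℚ) ^ (-2 : ℤ) := by
  induction m with
  | zero =>
    simp [Pprod, Hsum, padicNorm.zero]
  | succ m ih =>
    have hmp : m < p := Nat.lt_of_succ_lt hm
    have ih' := ih hmp
    have hPm1 : padicNorm p (Pprod p m - 1) ≤ (p:ℚ) ^ (-1 : ℤ) := by
      have : Pprod p m - 1 = (Pprod p m - 1 + p * Hsum m) - p * Hsum m := by ring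
      rw [this]
      refine padicNorm.sub.trans (max_le (ih'.trans (zpow_neg_le (by norm_num))) ?_)
      rw [padicNorm.mul, norm_p_rat]
      calc ((p:ℚ))⁻¹ * padicNorm p (Hsum m) ≤ ((p:ℚ))⁻¹ * 1 := by
            exact mul_le_mul_of_nonneg_left (norm_Hsum_le hmp) (by positivity)
        _ = (p:ℚ) ^ (-1 : ℤ) := by rw [mul_one, zpow_neg_one]
    have hsucc1 : (1:ℕ) ≤ m + 1 := Nat.succ_le_succ (Nat.zero_le m)
    have hP : Pprod p (m+1) = Pprod p m * (1 - (p:ℚ)/(m+1)) := by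
      unfold Pprod
      rw [Finset.prod_Icc_succ_top hsucc1]
      push_cast
      ring
    have hH : Hsum (m+1) = Hsum m + 1/((m:ℚ)+1) := by
      unfold Hsum
      rw [Finset.sum_Icc_succ_top hsucc1]
      push_cast
      ring
    have hre : Pprod p (m+1) - 1 + p * Hsum (m+1)
        = (Pprod p m - 1 + p * Hsum m) - ((p:ℚ)/(m+1)) * (Pprod p m - 1) := by
      rw [hP, hH]
      field_simp
      ring
    rw [hre]
    refine padicNorm.sub.trans (max_le ih' ?_)
    have h1 : padicNorm p ((p:ℚ)/(m+1)) = ((p:ℚ))⁻¹ := by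
      have : ((m:ℚ)+1) = ((m+1 : ℕ) : ℚ) := by push_cast; ring
      rw [div_eq_mul_one_div, padicNorm.mul, norm_p_rat, this,
        norm_inv_nat_unit hsucc1 hm, mul_one]
    rw [padicNorm.mul, h1]
    calc ((p:ℚ))⁻¹ * padicNorm p (Pprod p m - 1)
        ≤ ((p:ℚ))⁻¹ * (p:ℚ) ^ (-1 : ℤ) := by
          exact mul_le_mul_of_nonneg_left hPm1 (by positivity)
      _ = (p:ℚ) ^ (-2 : ℤ) := by
          rw [← zpow_neg_one]
          rw [← zpow_add₀ (by exact_mod_cast hp.out.pos.ne' : (p:ℚ) ≠ 0)]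
          norm_num


lemma norm_le_one_of_parts {a : ℚ} (ha : padicNorm p a ≤ 1) {b : ℚ} (hb : padicNorm p b ≤ 1) :
    padicNorm p (a * b) ≤ 1 := by
  rw [padicNorm.mul]
  exact mul_le_one₀ ha (padicNorm.nonneg _) hb

lemma norm_B_le {m : ℕ} (hm : m < p) : padicNorm p (1 - (p:ℚ) * Hsum m) ≤ 1 := by
  refine padicNorm.sub.trans (max_le (le_of_eq padicNorm.one) ?_)
  rw [padicNorm.mul, norm_p_rat]
  calc ((p:ℚ))⁻¹ * padicNorm p (Hsum m) ≤ 1 * 1 :=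
        mul_le_mul (pinv_le_one) (norm_Hsum_le hm) (padicNorm.nonneg _) zero_le_one
    _ = 1 := mul_one 1

lemma key_pow4 {m : ℕ} (hm : m < p) :
    padicNorm p ((Pprod p m) ^ 4 - 1 + 4 * p * Hsum m) ≤ (p:ℚ) ^ (-2 : ℤ) := by
  set A := Pprod p m with hA
  set h := Hsum m with hh
  set B : ℚ := 1 - (p:ℚ) * h with hB
  have hnA : padicNorm p A ≤ 1 := norm_Pprod_le hm
  have hnB : padicNorm p B ≤ 1 := norm_B_le hm
  have hnh : padicNorm p h ≤ 1 := norm_Hsum_le hm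
  have he : padicNorm p (A - B) ≤ (p:ℚ) ^ (-2 : ℤ) := by
    have : A - B = A - 1 + (p:ℚ) * h := by rw [hB]; ring
    rw [this]; exact key_ind hm
  have habB : padicNorm p (A^3 + A^2*B + A*B^2 + B^3) ≤ 1 := by
    have h3 : padicNorm p (A^3) ≤ 1 := by
      have : A^3 = A * (A * A) := by ring
      rw [this]; exact norm_le_one_of_parts hnA (norm_le_one_of_parts hnA hnA)
    have h2 : padicNorm p (A^2*B) ≤ 1 := by
      have : A^2*B = A * (A * B) := by ring
      rw [this]; exact norm_le_one_of_parts hnA (norm_le_one_of_parts hnA hnB)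
    have h1 : padicNorm p (A*B^2) ≤ 1 := by
      have : A*B^2 = A * (B * B) := by ring
      rw [this]; exact norm_le_one_of_parts hnA (norm_le_one_of_parts hnB hnB)
    have h0 : padicNorm p (B^3) ≤ 1 := by
      have : B^3 = B * (B * B) := by ring
      rw [this]; exact norm_le_one_of_parts hnB (norm_le_one_of_parts hnB hnB)
    refine padicNorm.nonarchimedean.trans (max_le (padicNorm.nonarchimedean.trans
      (max_le (padicNorm.nonarchimedean.trans (max_le h3 h2)) h1)) h0)
  have hdiff : padicNorm p (A^4 - B^4) ≤ (p:ℚ) ^ (-2 : ℤ) := by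
    have : A^4 - B^4 = (A - B) * (A^3 + A^2*B + A*B^2 + B^3) := by ring
    rw [this, padicNorm.mul]
    calc padicNorm p (A-B) * padicNorm p (A^3 + A^2*B + A*B^2 + B^3)
        ≤ (p:ℚ) ^ (-2 : ℤ) * 1 :=
          mul_le_mul he habB (padicNorm.nonneg _) (by positivity)
      _ = (p:ℚ) ^ (-2 : ℤ) := mul_one _
  have hBpart : padicNorm p (B^4 - 1 + 4 * p * h) ≤ (p:ℚ) ^ (-2 : ℤ) := by
    have : B^4 - 1 + 4 * (p:ℚ) * h
        = ((p:ℚ) * h) * ((p:ℚ) * h) * (6 - 4*((p:ℚ)*h) + ((p:ℚ)*h)*((p:ℚ)*h)) := by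
      rw [hB]; ring
    rw [this, padicNorm.mul, padicNorm.mul]
    have hph : padicNorm p ((p:ℚ) * h) ≤ (p:ℚ)⁻¹ := by
      rw [padicNorm.mul, norm_p_rat]
      calc ((p:ℚ))⁻¹ * padicNorm p h ≤ ((p:ℚ))⁻¹ * 1 :=
            mul_le_mul_of_nonneg_left hnh (by positivity)
        _ = ((p:ℚ))⁻¹ := mul_one _
    have hph1 : padicNorm p ((p:ℚ) * h) ≤ 1 := hph.trans pinv_le_one
    have hbr : padicNorm p (6 - 4*((p:ℚ)*h) + ((p:ℚ)*h)*((p:ℚ)*h)) ≤ 1 := by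
      refine padicNorm.nonarchimedean.trans (max_le (padicNorm.sub.trans (max_le ?_ ?_)) ?_)
      · exact_mod_cast padicNorm.of_int (p := p) 6
      · have h4 : padicNorm p (4:ℚ) ≤ 1 := by exact_mod_cast padicNorm.of_int (p := p) 4
        exact norm_le_one_of_parts h4 hph1
      · exact norm_le_one_of_parts hph1 hph1
    calc padicNorm p ((p:ℚ)*h) * padicNorm p ((p:ℚ)*h) * padicNorm p _
        ≤ (p:ℚ)⁻¹ * (p:ℚ)⁻¹ * 1 := by
          refine mul_le_mul (mul_le_mul hph hph (padicNorm.nonneg _) (by positivity)) hbr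
            (padicNorm.nonneg _) (by positivity)
      _ = (p:ℚ) ^ (-2 : ℤ) := by
          rw [mul_one, ← zpow_neg_one, ← zpow_add₀ (by exact_mod_cast hp.out.pos.ne' : (p:ℚ) ≠ 0)]
          norm_num
  have : A^4 - 1 + 4 * (p:ℚ) * h = (A^4 - B^4) + (B^4 - 1 + 4 * (p:ℚ) * h) := by ring
  rw [this]
  exact padicNorm.nonarchimedean.trans (max_le hdiff hBpart)


lemma norm_pow' (q : ℚ) (n : ℕ) : padicNorm p (q ^ n) = (padicNorm p q) ^ n := by
  induction n with
  | zero => simp [padicNorm.one]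
  | succ n ih => rw [pow_succ, padicNorm.mul, ih, pow_succ]

lemma choose_eq {m : ℕ} (h2 : m + 1 ≤ p) :
    (Nat.choose p (m+1) : ℚ) = (p:ℚ)/(m+1) * ∏ j ∈ Finset.Icc 1 m, (((p:ℚ) - j)/j) := by
  induction m with
  | zero => simp [Nat.choose_one_right]
  | succ m ih =>
    have hm1 : m + 1 ≤ p := Nat.le_of_succ_le h2
    have ih' := ih hm1
    have hcast : ((p - (m+1) : ℕ) : ℚ) = (p:ℚ) - (m+1) := by
      rw [Nat.cast_sub hm1]; push_cast; ring
    have hrec : (Nat.choose p (m+2) : ℚ) * (m+2) = (Nat.choose p (m+1) : ℚ) * ((p:ℚ) - (m+1)) := by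
      have := Nat.choose_succ_right_eq p (m+1)
      have h' : ((Nat.choose p (m+2) * (m+2) : ℕ) : ℚ) = ((Nat.choose p (m+1) * (p - (m+1)) : ℕ) : ℚ) := by
        exact_mod_cast congrArg (Nat.cast : ℕ → ℚ) this
      push_cast at h'
      rw [hcast] at h'
      exact_mod_cast h'
    have hprod : ∏ j ∈ Finset.Icc 1 (m+1), (((p:ℚ) - j)/j)
        = (∏ j ∈ Finset.Icc 1 m, (((p:ℚ) - j)/j)) * (((p:ℚ) - (m+1))/(m+1)) := by
      rw [Finset.prod_Icc_succ_top (Nat.succ_le_succ (Nat.zero_le m))]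
      push_cast
      ring
    have hm2ne : ((m:ℚ)+2) ≠ 0 := by positivity
    have hm1ne : ((m:ℚ)+1) ≠ 0 := by positivity
    have : (Nat.choose p (m+2) : ℚ) = (Nat.choose p (m+1) : ℚ) * ((p:ℚ) - (m+1)) / (m+2) := by
      field_simp at hrec ⊢
      push_cast at hrec ⊢
      linarith [hrec]
    rw [this, ih', hprod]
    push_cast
    field_simp
    ring

omit hp in
lemma prod_pow4 {m : ℕ} :
    (∏ j ∈ Finset.Icc 1 m, (((p:ℚ) - j)/j)) ^ 4 = (Pprod p m) ^ 4 := by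
  unfold Pprod
  rw [← Finset.prod_pow, ← Finset.prod_pow]
  refine Finset.prod_congr rfl ?_
  intro j hj
  simp only [Finset.mem_Icc] at hj
  have hj0 : (j:ℚ) ≠ 0 := by
    have := hj.1; positivity
  have : ((p:ℚ) - j)/j = -(1 - (p:ℚ)/j) := by field_simp; ring
  rw [this]
  ring


lemma term_bound {k : ℕ} (h1 : 1 ≤ k) (h2 : k < p) :
    padicNorm p ((p:ℚ)^4/(k:ℚ)^4 * ((Pprod p (k-1))^4 - 1 + 4*(p:ℚ)*Hsum (k-1)))
      ≤ (p:ℚ) ^ (-6 : ℤ) := by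
  have hk1 : k - 1 < p := lt_of_le_of_lt (Nat.sub_le k 1) h2
  have hX := key_pow4 (p := p) hk1
  rw [padicNorm.mul, padicNorm.div, norm_pow', norm_pow', norm_p_rat, norm_nat_unit h1 h2,
    one_pow, div_one]
  have hpne : (p:ℚ) ≠ 0 := by exact_mod_cast hp.out.pos.ne'
  calc ((p:ℚ)⁻¹)^4 * padicNorm p _ ≤ ((p:ℚ)⁻¹)^4 * (p:ℚ)^(-2:ℤ) :=
        mul_le_mul_of_nonneg_left hX (by positivity)
    _ = (p:ℚ) ^ (-6 : ℤ) := by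
        rw [inv_pow, ← zpow_natCast (p:ℚ) 4, ← zpow_neg, ← zpow_add₀ hpne]
        norm_num

end Aux


/-- For all sufficiently large primes `p`,
`∑_{k=0}^{p} C(p,k)^4 ≡ 2 + p^4·H_{p−1}(4) − 4·p^5·H_{p−1}(4,1) (mod p^6)`. -/
theorem sum_choose_pow_four_supercongruence :
    ∃ N : ℕ, ∀ p : ℕ, p.Prime → N ≤ p →
      (∑ k ∈ Finset.range (p + 1), (Nat.choose p k : ℚ) ^ 4)
          - 2 - (p : ℚ) ^ 4 * mhs (p - 1) [4] + 4 * (p : ℚ) ^ 5 * mhs (p - 1) [4, 1] = 0 ∨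
      (6 : ℤ) ≤ padicValRat p
        ((∑ k ∈ Finset.range (p + 1), (Nat.choose p k : ℚ) ^ 4)
          - 2 - (p : ℚ) ^ 4 * mhs (p - 1) [4] + 4 * (p : ℚ) ^ 5 * mhs (p - 1) [4, 1]) := by
  refine ⟨2, fun p hpp hp2 => ?_⟩
  haveI hp : Fact p.Prime := ⟨hpp⟩
  set D := (∑ k ∈ Finset.range (p + 1), (Nat.choose p k : ℚ) ^ 4)
          - 2 - (p : ℚ) ^ 4 * mhs (p - 1) [4] + 4 * (p : ℚ) ^ 5 * mhs (p - 1) [4, 1] with hDdef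
  have hm4 : mhs (p - 1) [4] = ∑ k ∈ Finset.Icc 1 (p-1), 1/(k:ℚ)^4 := by
    simp [mhs]
  have hm41 : mhs (p - 1) [4, 1] = ∑ k ∈ Finset.Icc 1 (p-1), 1/(k:ℚ)^4 * Hsum (k-1) := by
    simp [mhs, Hsum]
  have hsplit : ∑ k ∈ Finset.range (p + 1), (Nat.choose p k : ℚ) ^ 4
      = 2 + ∑ k ∈ Finset.Icc 1 (p-1), (Nat.choose p k : ℚ) ^ 4 := by
    rw [Finset.sum_range_succ]
    have h0 : Finset.range p = insert 0 (Finset.Icc 1 (p-1)) := by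
      ext x
      simp only [Finset.mem_range, Finset.mem_insert, Finset.mem_Icc]
      omega
    rw [h0, Finset.sum_insert (by simp)]
    simp [Nat.choose_self]
    ring
  have hch : ∀ k ∈ Finset.Icc 1 (p-1),
      (Nat.choose p k : ℚ)^4 = (p:ℚ)^4/(k:ℚ)^4 * (Pprod p (k-1))^4 := by
    intro k hk
    simp only [Finset.mem_Icc] at hk
    obtain ⟨m, rfl⟩ : ∃ m, k = m + 1 := ⟨k - 1, by omega⟩
    have hle : m + 1 ≤ p := by omega
    rw [choose_eq hle, mul_pow, div_pow]
    have : ((m:ℚ) + 1) = ((m + 1 : ℕ) : ℚ) := by push_cast; ring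
    rw [this, Nat.add_sub_cancel, prod_pow4]
  have hD : D = ∑ k ∈ Finset.Icc 1 (p-1),
      ((p:ℚ)^4/(k:ℚ)^4 * ((Pprod p (k-1))^4 - 1 + 4*(p:ℚ)*Hsum (k-1))) := by
    rw [hDdef, hsplit, Finset.sum_congr rfl hch, hm4, hm41,
      Finset.mul_sum, Finset.mul_sum]
    rw [show ∀ S T U : ℚ, 2 + S - 2 - T + U = (S - T) + U from fun _ _ _ => by ring]
    rw [← Finset.sum_sub_distrib, ← Finset.sum_add_distrib]
    refine Finset.sum_congr rfl fun k _ => by ring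
  have hnorm : padicNorm p D ≤ (p:ℚ) ^ (-6 : ℤ) := by
    rw [hD]
    refine padicNorm.sum_le' ?_ (by positivity)
    intro k hk
    simp only [Finset.mem_Icc] at hk
    exact term_bound hk.1 (by omega)
  by_cases hD0 : D = 0
  · exact Or.inl hD0
  · refine Or.inr ?_
    rw [padicNorm.eq_zpow_of_nonzero hD0] at hnorm
    have := (zpow_le_zpow_iff_right₀ (one_lt_p_rat (p := p))).mp hnorm
    omega
end

section
/- For all integers a ≥ b ≥ 0 and every positive integer p, one has the identity of natural numbers: C(a·p, b·p) · ∏_{n=1}^{b} C(n·p, p) = ∏_{n=a−b+1}^{a} C(n·p, p). -/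
lemma prod_choose_aux (c b p : ℕ) :
    (∏ n ∈ Finset.Icc (c + 1) (c + b), Nat.choose (n * p) p) *
      (p.factorial ^ b * (c * p).factorial) = ((c + b) * p).factorial := by
  induction b with
  | zero => simp
  | succ b ih =>
    rw [show c + (b + 1) = (c + b) + 1 from rfl,
      Finset.prod_Icc_succ_top (by omega : c + 1 ≤ c + b + 1)]
    have hk : p ≤ (c + b + 1) * p := Nat.le_mul_of_pos_left p (by omega)
    have hsub : (c + b + 1) * p - p = (c + b) * p := by
      rw [add_mul, one_mul]; omega
    have key := Nat.choose_mul_factorial_mul_factorial hk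
    rw [hsub] at key
    calc (∏ n ∈ Finset.Icc (c + 1) (c + b), Nat.choose (n * p) p) *
          Nat.choose ((c + b + 1) * p) p * (p.factorial ^ (b + 1) * (c * p).factorial)
        = ((∏ n ∈ Finset.Icc (c + 1) (c + b), Nat.choose (n * p) p) *
            (p.factorial ^ b * (c * p).factorial)) *
            (Nat.choose ((c + b + 1) * p) p * p.factorial) := by ring
      _ = ((c + b) * p).factorial * (Nat.choose ((c + b + 1) * p) p * p.factorial) := by rw [ih]
      _ = Nat.choose ((c + b + 1) * p) p * p.factorial * ((c + b) * p).factorial := by ring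
      _ = ((c + b + 1) * p).factorial := key

/-- For `a ≥ b ≥ 0` and `p ≥ 1`,
`C(ap, bp) · ∏_{n=1}^{b} C(np, p) = ∏_{n=a−b+1}^{a} C(np, p)` as natural numbers. -/
theorem choose_mul_prod_choose (a b p : ℕ) (hba : b ≤ a) (hp : 1 ≤ p) :
    Nat.choose (a * p) (b * p) * ∏ n ∈ Finset.Icc 1 b, Nat.choose (n * p) p =
      ∏ n ∈ Finset.Icc (a - b + 1) a, Nat.choose (n * p) p := by
  set c := a - b with hc
  have hab : a = c + b := by omega
  have hpos : 0 < p.factorial ^ b * (c * p).factorial :=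
    Nat.mul_pos (pow_pos p.factorial_pos _) (c * p).factorial_pos
  apply Nat.eq_of_mul_eq_mul_right hpos
  have h1 := prod_choose_aux 0 b p
  simp only [Nat.zero_add, Nat.zero_mul, Nat.factorial_zero, mul_one] at h1
  have h2 := prod_choose_aux c b p
  have hk : b * p ≤ a * p := Nat.mul_le_mul_right p hba
  have hsub : a * p - b * p = c * p := by rw [hc, Nat.sub_mul]
  have key := Nat.choose_mul_factorial_mul_factorial hk
  rw [hsub] at key
  calc Nat.choose (a * p) (b * p) * (∏ n ∈ Finset.Icc 1 b, Nat.choose (n * p) p) *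
        (p.factorial ^ b * (c * p).factorial)
      = Nat.choose (a * p) (b * p) *
          ((∏ n ∈ Finset.Icc 1 b, Nat.choose (n * p) p) * p.factorial ^ b) *
          (c * p).factorial := by ring
    _ = Nat.choose (a * p) (b * p) * (b * p).factorial * (c * p).factorial := by rw [h1]
    _ = (a * p).factorial := key
    _ = ((c + b) * p).factorial := by rw [← hab]
    _ = (∏ n ∈ Finset.Icc (c + 1) (c + b), Nat.choose (n * p) p) *
          (p.factorial ^ b * (c * p).factorial) := h2.symm
    _ = (∏ n ∈ Finset.Icc (c + 1) a, Nat.choose (n * p) p) *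
          (p.factorial ^ b * (c * p).factorial) := by rw [← hab]
end
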